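/- Let E : [t₀, ∞) → [0, ∞) be differentiable and nonincreasing, q > 1, and φ(t) := E(t)^{(q−1)/2}. Suppose J'(t) + ε·E(t) ≤ C·(−E'(t)) + C·(−E'(t))^{2/(q+1)} for all t ≥ t₀, where J ≥ 0 is differentiable with J(t₀) ≤ C·E(0), and ε, C > 0. Then ∫_{t₀}^∞ E(t)^{(q+1)/2} dt ≤ C'·(E(0) + E(0)^{(q+1)/2}) for some constant C' > 0. -/

import Mathlib

open Real Set intervalIntegral

set_option maxHeartbeats 800000

lemma my_deriv_nonpos_of_antitoneOn {E : ℝ → ℝ} {t₀ t : ℝ}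
    (hE : DifferentiableAt ℝ E t) (hA : AntitoneOn E (Set.Ici t₀)) (ht : t₀ ≤ t) :
    deriv E t ≤ 0 := by
  have h1 : Filter.Tendsto (slope E t) (nhdsWithin t (Set.Ioi t)) (nhds (deriv E t)) :=
    (hasDerivAt_iff_tendsto_slope.mp hE.hasDerivAt).mono_left
      (nhdsWithin_mono _ fun x hx => ne_of_gt hx)
  refine le_of_tendsto h1 ?_
  filter_upwards [self_mem_nhdsWithin] with x hx
  have hEx : E x ≤ E t :=
    hA (Set.mem_Ici.2 ht) (Set.mem_Ici.2 (ht.trans (le_of_lt hx))) (le_of_lt hx)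
  rw [slope_def_field]
  exact div_nonpos_of_nonpos_of_nonneg (by linarith) (by linarith [le_of_lt (Set.mem_Ioi.1 hx)])

lemma my_add_rpow_le {x y r : ℝ} (hx : 0 ≤ x) (hy : 0 ≤ y) (hr : 0 ≤ r) :
    (x + y) ^ r ≤ 2 ^ r * (x ^ r + y ^ r) := by
  have hm : 0 ≤ max x y := le_max_of_le_left hx
  calc (x + y) ^ r ≤ (2 * max x y) ^ r := by
        apply Real.rpow_le_rpow (by linarith) ?_ hr
        rcases le_total x y with h | h
        · rw [max_eq_right h]; linarith
        · rw [max_eq_left h]; linarith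
    _ = 2 ^ r * (max x y) ^ r := Real.mul_rpow (by norm_num) hm
    _ ≤ 2 ^ r * (x ^ r + y ^ r) := by
        apply mul_le_mul_of_nonneg_left ?_ (Real.rpow_nonneg (by norm_num) r)
        rcases le_total x y with h | h
        · rw [max_eq_right h]
          nlinarith [Real.rpow_nonneg hx r]
        · rw [max_eq_left h]
          nlinarith [Real.rpow_nonneg hy r]

theorem stmt18 (E J : ℝ → ℝ) (q ε C t₀ : ℝ)
    (hq : 1 < q) (hε : 0 < ε) (hC : 0 < C) (ht₀ : 0 < t₀)
    (hEdiff : Differentiable ℝ E) (hJdiff : Differentiable ℝ J)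
    (hEanti : AntitoneOn E (Set.Ici t₀))
    (hEnonneg : ∀ t ≥ t₀, 0 ≤ E t)
    (hJnonneg : ∀ t ≥ t₀, 0 ≤ J t)
    (hE0 : E t₀ ≤ E 0) (hE0nonneg : 0 ≤ E 0)
    (hJt₀ : J t₀ ≤ C * E 0)
    (hineq : ∀ t ≥ t₀, deriv J t + ε * E t ≤
      C * (-(deriv E t)) + C * (-(deriv E t)) ^ (2 / (q + 1))) :
    ∃ C' > 0, ∀ τ ≥ t₀,
      (∫ t in t₀..τ, E t ^ ((q + 1) / 2)) ≤ C' * (E 0 + E 0 ^ ((q + 1) / 2)) := by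
  have hq1 : (0:ℝ) < q - 1 := by linarith
  have hq2 : (0:ℝ) < q + 1 := by linarith
  have hq1' : q - 1 ≠ 0 := hq1.ne'
  have hq2' : q + 1 ≠ 0 := hq2.ne'
  set r : ℝ := (q + 1) / 2 with hr_def
  set a : ℝ := (q - 1) / 2 with ha_def
  set p : ℝ := (q + 1) / (q - 1) with hp_def
  have hr1 : 1 < r := by rw [hr_def, lt_div_iff₀ (by norm_num : (0:ℝ) < 2)]; linarith
  have hrpos : (0:ℝ) < r := by linarith
  have hapos : (0:ℝ) < a := by rw [ha_def]; positivity
  have hp1 : 1 < p := by rw [hp_def]; exact (one_lt_div hq1).2 (by linarith)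
  have hppos : (0:ℝ) < p := by linarith
  have hconj : p.HolderConjugate r := by
    rw [Real.holderConjugate_iff]
    constructor
    · exact hp1
    · rw [hp_def, hr_def]; field_simp; ring
  have hap : a * p = r := by rw [ha_def, hp_def, hr_def]; field_simp
  have har : a + 1 = r := by rw [ha_def, hr_def]; ring
  have htwor : 2 / (q + 1) * r = 1 := by rw [hr_def]; field_simp
  clear_value r a p
  have h2rpos : (0:ℝ) < 2 ^ (r + 1) := Real.rpow_pos_of_pos two_pos _
  have h2apos : (0:ℝ) < 2 ^ a := Real.rpow_pos_of_pos two_pos _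
  set μ : ℝ := ε * p / 2 ^ (r + 1) with hμ_def
  have hμpos : 0 < μ := by rw [hμ_def]; positivity
  set lam : ℝ := μ ^ (1 / p) with hlam_def
  have hlampos : 0 < lam := by
    rw [hlam_def]; exact Real.rpow_pos_of_pos hμpos _
  have hlamp : lam ^ p = μ := by
    rw [hlam_def, ← Real.rpow_mul hμpos.le, one_div, inv_mul_cancel₀ hppos.ne', Real.rpow_one]
  clear_value μ
  set K2 : ℝ := (C / lam) ^ r / r with hK2_def
  have hK2 : 0 ≤ K2 := by
    rw [hK2_def]
    exact div_nonneg (Real.rpow_nonneg (div_nonneg hC.le hlampos.le) _) hrpos.le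
  clear_value lam K2
  rcases eq_or_lt_of_le hE0nonneg with hE00 | hE0pos
  · -- degenerate case E 0 = 0
    refine ⟨1, one_pos, fun τ hτ => ?_⟩
    have heq : Set.EqOn (fun t => E t ^ r) (fun _ => (0:ℝ)) (Set.uIcc t₀ τ) := by
      intro t ht
      rw [Set.uIcc_of_le hτ] at ht
      have h1 : E t ≤ 0 := by
        have := hEanti Set.self_mem_Ici (Set.mem_Ici.2 ht.1) ht.1
        linarith [hE0]
      have h2 : 0 ≤ E t := hEnonneg t ht.1
      have h3 : E t = 0 := le_antisymm h1 h2
      simp only [h3]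
      exact Real.zero_rpow hrpos.ne'
    rw [intervalIntegral.integral_congr heq, intervalIntegral.integral_zero, ← hE00,
      Real.zero_rpow hrpos.ne']
    norm_num
  · -- main case
    refine ⟨2 / ε * (2 * C * 2 ^ a + K2 + ε), ?_, fun τ hτ => ?_⟩
    · apply mul_pos (div_pos two_pos hε)
      have h7 := mul_pos (mul_pos two_pos hC) h2apos
      linarith [hK2]
    have hτ1 : (0:ℝ) < τ - t₀ + 1 := by linarith
    set η : ℝ := min (E 0) ((E 0 / (τ - t₀ + 1)) ^ (1 / r)) with hη_def
    have hηpos : 0 < η := by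
      rw [hη_def]; exact lt_min hE0pos (Real.rpow_pos_of_pos (div_pos hE0pos hτ1) _)
    have hη1 : η ≤ E 0 := by rw [hη_def]; exact min_le_left _ _
    have hηr : η ^ r ≤ E 0 / (τ - t₀ + 1) := by
      have h1 : η ≤ (E 0 / (τ - t₀ + 1)) ^ (1 / r) := by
        rw [hη_def]; exact min_le_right _ _
      calc η ^ r ≤ ((E 0 / (τ - t₀ + 1)) ^ (1 / r)) ^ r :=
            Real.rpow_le_rpow hηpos.le h1 hrpos.le
        _ = E 0 / (τ - t₀ + 1) := by
            rw [← Real.rpow_mul (by positivity), one_div, inv_mul_cancel₀ hrpos.ne',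
              Real.rpow_one]
    have hη2 : η ^ r * (τ - t₀) ≤ E 0 := by
      have h3 : η ^ r * (τ - t₀) ≤ E 0 / (τ - t₀ + 1) * (τ - t₀) :=
        mul_le_mul_of_nonneg_right hηr (by linarith)
      have h4 : E 0 / (τ - t₀ + 1) * (τ - t₀) ≤ E 0 := by
        rw [div_mul_eq_mul_div, div_le_iff₀ hτ1]
        have h5 : 0 ≤ E 0 := hE0pos.le
        nlinarith [h5]
      linarith
    clear_value η
    set Ψ : ℝ := (E 0 + η) ^ a with hΨ_def
    have hΨpos : 0 < Ψ := by
      rw [hΨ_def]; exact Real.rpow_pos_of_pos (by linarith) a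
    have hΨle : Ψ ≤ 2 ^ a * E 0 ^ a := by
      rw [hΨ_def]
      calc (E 0 + η) ^ a ≤ (2 * E 0) ^ a :=
            Real.rpow_le_rpow (by linarith) (by linarith) hapos.le
        _ = 2 ^ a * E 0 ^ a := Real.mul_rpow (by norm_num) hE0nonneg
    clear_value Ψ
    set K1 : ℝ := C * Ψ + K2 with hK1_def
    have hK1pos : 0 < K1 := by have h6 := mul_pos hC hΨpos; linarith [hK2]
    clear_value K1
    -- FTC derivative of the integral
    have hEc : Continuous fun s : ℝ => E s ^ r :=
      (Real.continuous_rpow_const hrpos.le).comp hEdiff.continuous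
    have hGd : ∀ t : ℝ, HasDerivAt (fun u => ∫ s in t₀..u, E s ^ r) (E t ^ r) t := fun t =>
      intervalIntegral.integral_hasDerivAt_right (hEc.intervalIntegrable _ _)
        (hEc.stronglyMeasurableAtFilter _ _) hEc.continuousAt
    set W : ℝ → ℝ := fun t => K1 * E t + (E t + η) ^ a * J t +
      ε / 2 * (∫ s in t₀..t, E s ^ r) - ε / 2 * η ^ r * (t - t₀) with hW_def
    have hWd : ∀ t, t₀ ≤ t → HasDerivAt W
        (K1 * deriv E t + (deriv E t * a * (E t + η) ^ (a - 1) * J t +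
          (E t + η) ^ a * deriv J t) + ε / 2 * E t ^ r - ε / 2 * η ^ r) t := by
      intro t ht
      have hE' := (hEdiff t).hasDerivAt
      have hJ' := (hJdiff t).hasDerivAt
      have hbase : E t + η ≠ 0 := by
        have := hEnonneg t ht; positivity
      have hψ' : HasDerivAt (fun y => (E y + η) ^ a) (deriv E t * a * (E t + η) ^ (a - 1)) t :=
        (hE'.add_const η).rpow_const (Or.inl hbase)
      have h1 : HasDerivAt (fun t => K1 * E t) (K1 * deriv E t) t := hE'.const_mul K1
      have h2 : HasDerivAt (fun t => (E t + η) ^ a * J t)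
          (deriv E t * a * (E t + η) ^ (a - 1) * J t + (E t + η) ^ a * deriv J t) t :=
        hψ'.mul hJ'
      have h3 : HasDerivAt (fun t => ε / 2 * (∫ s in t₀..t, E s ^ r)) (ε / 2 * E t ^ r) t :=
        (hGd t).const_mul _
      have h4 : HasDerivAt (fun t : ℝ => ε / 2 * η ^ r * (t - t₀)) (ε / 2 * η ^ r) t := by
        simpa using ((hasDerivAt_id t).sub_const t₀).const_mul (ε / 2 * η ^ r)
      exact ((h1.add h2).add h3).sub h4
    -- pointwise derivative bound
    have hkey : ∀ t, t₀ ≤ t → K1 * deriv E t + (deriv E t * a * (E t + η) ^ (a - 1) * J t +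
        (E t + η) ^ a * deriv J t) + ε / 2 * E t ^ r - ε / 2 * η ^ r ≤ 0 := by
      intro t ht
      have he : 0 ≤ E t := hEnonneg t ht
      have he' : deriv E t ≤ 0 := my_deriv_nonpos_of_antitoneOn (hEdiff t) hEanti ht
      have hψnn : 0 ≤ (E t + η) ^ a := Real.rpow_nonneg (by linarith) a
      have hEle : E t ≤ E 0 := le_trans (hEanti Set.self_mem_Ici (Set.mem_Ici.2 ht) ht) hE0
      have hψle : (E t + η) ^ a ≤ Ψ := by
        rw [hΨ_def]; exact Real.rpow_le_rpow (by linarith) (by linarith) hapos.le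
      have hA : E t ^ r ≤ (E t + η) ^ a * E t := by
        have h1 : E t ^ r = E t ^ a * E t := by
          rw [← har, Real.rpow_add' he (by linarith : a + 1 ≠ 0), Real.rpow_one]
        rw [h1]
        exact mul_le_mul_of_nonneg_right
          (Real.rpow_le_rpow he (by linarith) hapos.le) he
      have hB : (E t + η) ^ a * (deriv J t + ε * E t) ≤
          (E t + η) ^ a * (C * (-(deriv E t)) + C * (-(deriv E t)) ^ (2 / (q + 1))) :=
        mul_le_mul_of_nonneg_left (hineq t ht) hψnn
      have hb : 0 ≤ (-(deriv E t)) ^ (2 / (q + 1)) := Real.rpow_nonneg (by linarith) _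
      have hD : C * ((E t + η) ^ a * (-(deriv E t)) ^ (2 / (q + 1))) ≤
          ε / 2 * (E t ^ r + η ^ r) + K2 * (-(deriv E t)) := by
        have hy := Real.young_inequality_of_nonneg
          (a := lam * (E t + η) ^ a)
          (b := C / lam * (-(deriv E t)) ^ (2 / (q + 1)))
          (mul_nonneg hlampos.le hψnn)
          (mul_nonneg (div_nonneg hC.le hlampos.le) hb) hconj
        have hL : (lam * (E t + η) ^ a) * (C / lam * (-(deriv E t)) ^ (2 / (q + 1))) =
            C * ((E t + η) ^ a * (-(deriv E t)) ^ (2 / (q + 1))) := by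
          field_simp
        have hR1 : (lam * (E t + η) ^ a) ^ p / p ≤ ε / 2 * (E t ^ r + η ^ r) := by
          have e1 : (lam * (E t + η) ^ a) ^ p = μ * (E t + η) ^ r := by
            rw [Real.mul_rpow hlampos.le hψnn, hlamp, ← Real.rpow_mul (by linarith), hap]
          have e2 : μ / p = ε / 2 ^ (r + 1) := by
            rw [hμ_def]; field_simp [hppos.ne', h2rpos.ne']
          have e3 : (E t + η) ^ r ≤ 2 ^ r * (E t ^ r + η ^ r) :=
            my_add_rpow_le he hηpos.le hrpos.le
          have e4 : (2:ℝ) ^ (r + 1) = 2 ^ r * 2 := by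
            rw [Real.rpow_add two_pos, Real.rpow_one]
          calc (lam * (E t + η) ^ a) ^ p / p = μ / p * (E t + η) ^ r := by rw [e1]; ring
            _ = ε / 2 ^ (r + 1) * (E t + η) ^ r := by rw [e2]
            _ ≤ ε / 2 ^ (r + 1) * (2 ^ r * (E t ^ r + η ^ r)) :=
                mul_le_mul_of_nonneg_left e3 (by positivity)
            _ = ε / 2 * (E t ^ r + η ^ r) := by
                rw [e4]; field_simp
        have hR2 : (C / lam * (-(deriv E t)) ^ (2 / (q + 1))) ^ r / r = K2 * (-(deriv E t)) := by
          rw [Real.mul_rpow (by positivity) hb,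
            ← Real.rpow_mul (by linarith : (0:ℝ) ≤ -(deriv E t)), htwor, Real.rpow_one, hK2_def]
          ring
        calc C * ((E t + η) ^ a * (-(deriv E t)) ^ (2 / (q + 1)))
            = (lam * (E t + η) ^ a) * (C / lam * (-(deriv E t)) ^ (2 / (q + 1))) := hL.symm
          _ ≤ (lam * (E t + η) ^ a) ^ p / p +
              (C / lam * (-(deriv E t)) ^ (2 / (q + 1))) ^ r / r := hy
          _ ≤ ε / 2 * (E t ^ r + η ^ r) + K2 * (-(deriv E t)) :=
              add_le_add hR1 (le_of_eq hR2)
      have hC1 : (E t + η) ^ a * (C * (-(deriv E t))) ≤ C * Ψ * (-(deriv E t)) := by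
        have h5 : (E t + η) ^ a * (-(deriv E t)) ≤ Ψ * (-(deriv E t)) :=
          mul_le_mul_of_nonneg_right hψle (by linarith)
        calc (E t + η) ^ a * (C * (-(deriv E t)))
            = C * ((E t + η) ^ a * (-(deriv E t))) := by ring
          _ ≤ C * (Ψ * (-(deriv E t))) := mul_le_mul_of_nonneg_left h5 hC.le
          _ = C * Ψ * (-(deriv E t)) := by ring
      have hψ'J : deriv E t * a * (E t + η) ^ (a - 1) * J t ≤ 0 := by
        apply mul_nonpos_of_nonpos_of_nonneg ?_ (hJnonneg t ht)
        exact mul_nonpos_of_nonpos_of_nonneg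
          (mul_nonpos_of_nonpos_of_nonneg he' hapos.le)
          (Real.rpow_nonneg (by linarith) _)
      have hAε : ε * E t ^ r ≤ ε * ((E t + η) ^ a * E t) :=
        mul_le_mul_of_nonneg_left hA hε.le
      have eq2 : C * Ψ * (-(deriv E t)) + K2 * (-(deriv E t)) = -(K1 * deriv E t) := by
        rw [hK1_def]; ring
      linarith [hB, hD, hC1, hψ'J, hAε, eq2]
    -- W is antitone on [t₀, τ]
    have hWanti : AntitoneOn W (Set.Icc t₀ τ) := by
      apply antitoneOn_of_deriv_nonpos (convex_Icc _ _)
      · intro t ht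
        exact (hWd t ht.1).continuousAt.continuousWithinAt
      · rw [interior_Icc]
        intro t ht
        exact (hWd t ht.1.le).differentiableAt.differentiableWithinAt
      · rw [interior_Icc]
        intro t ht
        rw [(hWd t ht.1.le).deriv]
        exact hkey t ht.1.le
    have hWle : W τ ≤ W t₀ :=
      hWanti (Set.left_mem_Icc.2 hτ) (Set.right_mem_Icc.2 hτ) hτ
    simp only [hW_def] at hWle
    rw [intervalIntegral.integral_same] at hWle
    -- extract the integral bound
    have hψτnn : 0 ≤ (E τ + η) ^ a * J τ :=
      mul_nonneg (Real.rpow_nonneg (by linarith [hEnonneg τ hτ]) _) (hJnonneg τ hτ)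
    have hEτ : 0 ≤ E τ := hEnonneg τ hτ
    have hψt₀ : (E t₀ + η) ^ a ≤ Ψ := by
      rw [hΨ_def]
      exact Real.rpow_le_rpow (by linarith [hEnonneg t₀ le_rfl]) (by linarith) hapos.le
    have hJt₀' : 0 ≤ J t₀ := hJnonneg t₀ le_rfl
    have hψJt₀ : (E t₀ + η) ^ a * J t₀ ≤ Ψ * (C * E 0) :=
      mul_le_mul hψt₀ hJt₀ hJt₀' hΨpos.le
    have hK1E : K1 * E t₀ ≤ K1 * E 0 := mul_le_mul_of_nonneg_left hE0 hK1pos.le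
    have e5 : ε / 2 * (η ^ r * (τ - t₀)) ≤ ε / 2 * E 0 :=
      mul_le_mul_of_nonneg_left hη2 (by positivity)
    have e6 : 0 ≤ K1 * E τ := mul_nonneg hK1pos.le hEτ
    have step1 : ε / 2 * (∫ s in t₀..τ, E s ^ r) ≤
        K1 * E t₀ + (E t₀ + η) ^ a * J t₀ + ε / 2 * (η ^ r * (τ - t₀)) := by
      linarith [hWle, hψτnn, e6]
    have hI : ε / 2 * (∫ s in t₀..τ, E s ^ r) ≤ K1 * E 0 + Ψ * (C * E 0) + ε / 2 * E 0 := by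
      linarith [step1, hK1E, hψJt₀, e5]
    have hΨE0 : Ψ * E 0 ≤ 2 ^ a * E 0 ^ r := by
      have h1 : Ψ * E 0 ≤ 2 ^ a * E 0 ^ a * E 0 := mul_le_mul_of_nonneg_right hΨle hE0nonneg
      have h2 : E 0 ^ a * E 0 = E 0 ^ r := by
        rw [← har, Real.rpow_add hE0pos, Real.rpow_one]
      have h3 : 2 ^ a * (E 0 ^ a * E 0) = 2 ^ a * E 0 ^ r := by rw [h2]
      linarith [h1, h3]
    have hCΨ : C * (Ψ * E 0) ≤ C * (2 ^ a * E 0 ^ r) := mul_le_mul_of_nonneg_left hΨE0 hC.le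
    have eqK1 : K1 * E 0 = C * (Ψ * E 0) + K2 * E 0 := by rw [hK1_def]; ring
    have hE0r : 0 ≤ E 0 ^ r := Real.rpow_nonneg hE0nonneg r
    have hlin : ε / 2 * (∫ s in t₀..τ, E s ^ r) ≤
        (2 * C * 2 ^ a + K2 + ε) * (E 0 + E 0 ^ r) := by
      linarith [hI, eqK1, hCΨ, mul_nonneg (mul_nonneg hC.le h2apos.le) hE0nonneg,
        mul_nonneg hK2 hE0r, mul_nonneg hε.le hE0r, mul_nonneg hε.le hE0nonneg]
    calc (∫ t in t₀..τ, E t ^ r) = 2 / ε * (ε / 2 * (∫ s in t₀..τ, E s ^ r)) := by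
          field_simp
      _ ≤ 2 / ε * ((2 * C * 2 ^ a + K2 + ε) * (E 0 + E 0 ^ r)) :=
          mul_le_mul_of_nonneg_left hlin (by positivity)
      _ = 2 / ε * (2 * C * 2 ^ a + K2 + ε) * (E 0 + E 0 ^ r) := by ring
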